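/- If the matrix A (n×n, n≥2) with diagonal entries -a_i (a_i>0), subdiagonal entries b_i (b_i>0, entry (i+1,i)=b_i for i=1..n-1), top-right entry (1,n) equal to -b_n (b_n>0), and all other entries zero, satisfies (b_1⋯b_n)/(a_1⋯a_n) < sec(π/n)^n, then A is Hurwitz (all eigenvalues have negative real part). -/

import Mathlib

open Matrix Real

/-- Hurwitz: every complex eigenvalue has strictly negative real part. -/
def Hurwitz {n : Type*} [Fintype n] [DecidableEq n] (A : Matrix n n ℝ) : Prop :=
  ∀ μ ∈ spectrum ℂ (A.map (algebraMap ℝ ℂ)), μ.re < 0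

theorem secant_criterion_sufficient (n : ℕ) (hn : 2 ≤ n)
    (a b : Fin n → ℝ) (ha : ∀ i, 0 < a i) (hb : ∀ i, 0 < b i)
    (A : Matrix (Fin n) (Fin n) ℝ)
    (hA : ∀ i j : Fin n, A i j =
      if i = j then -a i
      else if (i : ℕ) = (j : ℕ) + 1 then b j
      else if (i : ℕ) = 0 ∧ (j : ℕ) = n - 1 then -b j
      else 0)
    (hsec : (∏ i, b i) / (∏ i, a i) < (1 / Real.cos (Real.pi / n)) ^ n) :
    Hurwitz A := by
  have hn0 : 0 < n := by omega
  have hprodb : (0:ℝ) < ∏ i, b i := Finset.prod_pos fun i _ => hb i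
  have hproda : (0:ℝ) < ∏ i, a i := Finset.prod_pos fun i _ => ha i
  -- dispose of n = 2
  rcases eq_or_lt_of_le hn with h2 | h3
  · exfalso
    have : ((n:ℝ)) = 2 := by exact_mod_cast h2.symm
    rw [this, Real.cos_pi_div_two, div_zero, zero_pow (by omega : n ≠ 0)] at hsec
    exact absurd hsec (not_lt.2 (le_of_lt (div_pos hprodb hproda)))
  have hcos : 0 < Real.cos (Real.pi / n) := by
    apply Real.cos_pos_of_mem_Ioo
    constructor
    · have := Real.pi_pos
      have : 0 < Real.pi / n := div_pos Real.pi_pos (by positivity)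
      linarith [Real.pi_pos, this]
    · exact div_lt_div_of_pos_left Real.pi_pos (by norm_num) (by exact_mod_cast h3)
  intro μ hμ
  by_contra hre
  push_neg at hre  -- 0 ≤ μ.re
  -- eigenvector
  set M := A.map (algebraMap ℝ ℂ) with hM
  have h1 : ¬ IsUnit (algebraMap ℂ (Matrix (Fin n) (Fin n) ℂ) μ - M) := spectrum.mem_iff.1 hμ
  have hdet : (algebraMap ℂ (Matrix (Fin n) (Fin n) ℂ) μ - M).det = 0 := by
    by_contra h
    exact h1 ((Matrix.isUnit_iff_isUnit_det _).2 (isUnit_iff_ne_zero.2 h))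
  obtain ⟨v, hvne, hv⟩ := (Matrix.exists_mulVec_eq_zero_iff).2 hdet
  have heig : ∀ i, μ * v i = ∑ j, ((A i j : ℝ) : ℂ) * v j := by
    intro i
    have := congrFun hv i
    rw [Algebra.algebraMap_eq_smul_one, Matrix.sub_mulVec, Matrix.smul_mulVec,
      Matrix.one_mulVec] at this
    have h2 : (μ • v) i - M.mulVec v i = 0 := this
    simp only [Pi.smul_apply, smul_eq_mul, sub_eq_zero] at h2
    rw [h2]
    simp [Matrix.mulVec, dotProduct, hM, Matrix.map_apply]
  have hz : ∀ i : Fin n, μ + ((a i : ℝ) : ℂ) ≠ 0 := by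
    intro i h
    have : (μ + ((a i : ℝ) : ℂ)).re = 0 := by rw [h]; simp
    simp only [Complex.add_re, Complex.ofReal_re] at this
    have := ha i; linarith
  -- ℕ-indexed versions
  set F : ℕ → Fin n := fun k => ⟨k % n, Nat.mod_lt _ hn0⟩ with hFdef
  have hF : ∀ k (h : k < n), F k = ⟨k, h⟩ := by
    intro k h; simp [hFdef, Nat.mod_eq_of_lt h]
  set V : ℕ → ℂ := fun k => v (F k) with hVdef
  set α : ℕ → ℂ := fun k => ((a (F k) : ℝ) : ℂ) with hadef
  set B : ℕ → ℂ := fun k => ((b (F k) : ℝ) : ℂ) with hbdef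
  have hzN : ∀ k, μ + α k ≠ 0 := fun k => hz (F k)
  -- row equations
  have hrowN : ∀ k, 0 < k → (h : k < n) → (μ + α k) * V k = B (k-1) * V (k-1) := by
    intro k hk0 hk
    have hk1 : k - 1 < n := by omega
    set i : Fin n := ⟨k, hk⟩ with hidef
    set p : Fin n := ⟨k-1, hk1⟩ with hpdef
    have hip : p ≠ i := fun h => by
      have : k - 1 = k := congrArg Fin.val h
      omega
    have hsum : ∑ j, ((A i j : ℝ) : ℂ) * v j
        = ((A i p : ℝ) : ℂ) * v p + ((A i i : ℝ) : ℂ) * v i := by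
      have hsp := Finset.sum_pair (f := fun j => ((A i j : ℝ) : ℂ) * v j) hip
      rw [← hsp]
      apply (Finset.sum_subset (Finset.subset_univ _) _).symm
      intro j _ hj
      simp only [Finset.mem_insert, Finset.mem_singleton, not_or] at hj
      have n1 : (j : ℕ) ≠ k - 1 := fun h => hj.1 (Fin.ext h)
      have n2 : (j : ℕ) ≠ k := fun h => hj.2 (Fin.ext h)
      have hAij : A i j = 0 := by
        have c1 : ¬ i = j := fun h => n2 ((congrArg Fin.val h).symm)
        have c2 : ¬ (i : ℕ) = (j : ℕ) + 1 := by
          intro h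
          have h' : k = (j : ℕ) + 1 := h
          omega
        have c3 : ¬ ((i : ℕ) = 0 ∧ (j : ℕ) = n - 1) := by
          intro h
          have h1 : k = 0 := h.1
          omega
        rw [hA, if_neg c1, if_neg c2, if_neg c3]
      rw [hAij]; simp
    have hApi : A i p = b p := by
      rw [hA]
      have c1 : ¬ i = p := fun h => hip h.symm
      have c2 : (i : ℕ) = (p : ℕ) + 1 := show k = k - 1 + 1 by omega
      rw [if_neg c1, if_pos c2]
    have hAii : A i i = -a i := by rw [hA]; simp
    have E := heig i
    rw [hsum, hApi, hAii] at E
    push_cast at E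
    have hVk : V k = v i := by rw [hVdef]; simp only; rw [hF k hk]
    have hVk1 : V (k-1) = v p := by rw [hVdef]; simp only; rw [hF (k-1) hk1]
    have hαk : α k = ((a i : ℝ) : ℂ) := by rw [hadef]; simp only; rw [hF k hk]
    have hBk1 : B (k-1) = ((b p : ℝ) : ℂ) := by rw [hbdef]; simp only; rw [hF (k-1) hk1]
    rw [hVk, hVk1, hαk, hBk1]
    linear_combination E
  have hrow0 : (μ + α 0) * V 0 = -(B (n-1)) * V (n-1) := by
    have hq : n - 1 < n := by omega
    set i : Fin n := ⟨0, hn0⟩ with hidef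
    set q : Fin n := ⟨n-1, hq⟩ with hqdef
    have hiq : q ≠ i := fun h => by
      have : n - 1 = 0 := congrArg Fin.val h
      omega
    have hsum : ∑ j, ((A i j : ℝ) : ℂ) * v j
        = ((A i q : ℝ) : ℂ) * v q + ((A i i : ℝ) : ℂ) * v i := by
      have hsp := Finset.sum_pair (f := fun j => ((A i j : ℝ) : ℂ) * v j) hiq
      rw [← hsp]
      apply (Finset.sum_subset (Finset.subset_univ _) _).symm
      intro j _ hj
      simp only [Finset.mem_insert, Finset.mem_singleton, not_or] at hj
      have n1 : (j : ℕ) ≠ n - 1 := fun h => hj.1 (Fin.ext h)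
      have n2 : (j : ℕ) ≠ 0 := fun h => hj.2 (Fin.ext h)
      have hAij : A i j = 0 := by
        have c1 : ¬ i = j := fun h => n2 ((congrArg Fin.val h).symm)
        have c2 : ¬ (i : ℕ) = (j : ℕ) + 1 := by
          intro h
          have h' : (0 : ℕ) = (j : ℕ) + 1 := h
          omega
        have c3 : ¬ ((i : ℕ) = 0 ∧ (j : ℕ) = n - 1) := by
          intro h
          exact n1 h.2
        rw [hA, if_neg c1, if_neg c2, if_neg c3]
      rw [hAij]; simp
    have hAqi : A i q = -b q := by
      rw [hA]
      have c1 : ¬ i = q := fun h => hiq h.symm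
      have c2 : ¬ (i : ℕ) = (q : ℕ) + 1 := by
        intro h
        have h' : (0 : ℕ) = (q : ℕ) + 1 := h
        omega
      have c3 : (i : ℕ) = 0 ∧ (q : ℕ) = n - 1 := ⟨rfl, rfl⟩
      rw [if_neg c1, if_neg c2, if_pos c3]
    have hAii : A i i = -a i := by rw [hA]; simp
    have E := heig i
    rw [hsum, hAqi, hAii] at E
    push_cast at E
    have hV0 : V 0 = v i := by rw [hVdef]; simp only; rw [hF 0 hn0]
    have hVq : V (n-1) = v q := by rw [hVdef]; simp only; rw [hF (n-1) hq]
    have hα0 : α 0 = ((a i : ℝ) : ℂ) := by rw [hadef]; simp only; rw [hF 0 hn0]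
    have hBq : B (n-1) = ((b q : ℝ) : ℂ) := by rw [hbdef]; simp only; rw [hF (n-1) hq]
    rw [hV0, hVq, hα0, hBq]
    linear_combination E
  -- telescoping
  have tel : ∀ k, k < n → (∏ i ∈ Finset.range k, (μ + α (i+1))) * V k
      = (∏ i ∈ Finset.range k, B i) * V 0 := by
    intro k
    induction k with
    | zero => intro _; simp
    | succ k ih =>
      intro hk
      have hk' : k < n := by omega
      have ihk := ih hk'
      rw [Finset.prod_range_succ, Finset.prod_range_succ]
      have hr := hrowN (k+1) (by omega) hk
      have : k + 1 - 1 = k := by omega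
      rw [this] at hr
      calc (∏ i ∈ Finset.range k, (μ + α (i+1))) * (μ + α (k+1)) * V (k+1)
          = (∏ i ∈ Finset.range k, (μ + α (i+1))) * ((μ + α (k+1)) * V (k+1)) := by ring
        _ = (∏ i ∈ Finset.range k, (μ + α (i+1))) * (B k * V k) := by rw [hr]
        _ = B k * ((∏ i ∈ Finset.range k, (μ + α (i+1))) * V k) := by ring
        _ = B k * ((∏ i ∈ Finset.range k, B i) * V 0) := by rw [ihk]
        _ = (∏ i ∈ Finset.range k, B i) * B k * V 0 := by ring
  -- V 0 ≠ 0
  have hV0ne : V 0 ≠ 0 := by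
    intro hV0
    apply hvne
    have hall : ∀ k, k < n → V k = 0 := by
      intro k
      induction k with
      | zero => intro _; exact hV0
      | succ k ih =>
        intro hk
        have hr := hrowN (k+1) (by omega) hk
        have h1 : k + 1 - 1 = k := by omega
        rw [h1, ih (by omega), mul_zero] at hr
        exact (mul_eq_zero.1 hr).resolve_left (hzN (k+1))
    funext i
    have := hall i.1 i.isLt
    rw [hVdef] at this
    simp only at this
    rw [hF i.1 i.isLt] at this
    simpa using this
  have hVn1ne : V (n-1) ≠ 0 := by
    intro h
    rw [h, mul_zero] at hrow0
    exact mul_ne_zero (hzN 0) hV0ne hrow0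
  -- characteristic equation
  have key : (∏ i ∈ Finset.range n, (μ + α i)) = -(∏ i ∈ Finset.range n, B i) := by
    have t1 := tel (n-1) (by omega)
    have e1 : (μ + α 0) * ((∏ i ∈ Finset.range (n-1), (μ + α (i+1))) * V (n-1))
        = (μ + α 0) * ((∏ i ∈ Finset.range (n-1), B i) * V 0) := by rw [t1]
    have e2 : (μ + α 0) * ((∏ i ∈ Finset.range (n-1), B i) * V 0)
        = (∏ i ∈ Finset.range (n-1), B i) * (-(B (n-1)) * V (n-1)) := by
      rw [← hrow0]; ring
    have hne : n - 1 + 1 = n := by omega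
    have e3 : ∏ i ∈ Finset.range n, (μ + α i)
        = (∏ i ∈ Finset.range (n-1), (μ + α (i+1))) * (μ + α 0) := by
      conv_lhs => rw [← hne, Finset.prod_range_succ']
    have e4 : ∏ i ∈ Finset.range n, B i
        = (∏ i ∈ Finset.range (n-1), B i) * B (n-1) := by
      conv_lhs => rw [← hne, Finset.prod_range_succ]
    have : (∏ i ∈ Finset.range n, (μ + α i)) * V (n-1)
        = -(∏ i ∈ Finset.range n, B i) * V (n-1) := by
      rw [e3, e4]
      calc (∏ i ∈ Finset.range (n-1), (μ + α (i+1))) * (μ + α 0) * V (n-1)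
          = (μ + α 0) * ((∏ i ∈ Finset.range (n-1), (μ + α (i+1))) * V (n-1)) := by ring
        _ = (μ + α 0) * ((∏ i ∈ Finset.range (n-1), B i) * V 0) := by rw [t1]
        _ = (∏ i ∈ Finset.range (n-1), B i) * (-(B (n-1)) * V (n-1)) := e2
        _ = -((∏ i ∈ Finset.range (n-1), B i) * B (n-1)) * V (n-1) := by ring
    exact mul_right_cancel₀ hVn1ne this
  -- convert to Fin products
  have prodeq : (∏ i : Fin n, (μ + ((a i : ℝ) : ℂ))) = -(∏ i : Fin n, ((b i : ℝ) : ℂ)) := by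
    have e1 : (∏ i : Fin n, (μ + ((a i : ℝ) : ℂ))) = ∏ i ∈ Finset.range n, (μ + α i) := by
      rw [← Fin.prod_univ_eq_prod_range (fun k => μ + α k) n]
      apply Finset.prod_congr rfl
      intro i _
      rw [hadef]
      simp only
      congr 2
      rw [hF i.1 i.isLt]
    have e2 : (∏ i : Fin n, ((b i : ℝ) : ℂ)) = ∏ i ∈ Finset.range n, B i := by
      rw [← Fin.prod_univ_eq_prod_range (fun k => B k) n]
      apply Finset.prod_congr rfl
      intro i _
      rw [hbdef]
      simp only
      congr 2
      rw [hF i.1 i.isLt]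
    rw [e1, e2, key]
  -- analytic part
  have hzre : ∀ i : Fin n, 0 < (μ + ((a i : ℝ) : ℂ)).re := by
    intro i
    simp only [Complex.add_re, Complex.ofReal_re]
    have := ha i; linarith
  have hzne2 : ∀ i : Fin n, (μ + ((a i : ℝ) : ℂ)) ≠ 0 := hz
  set t : Fin n → ℝ := fun i => |Complex.arg (μ + ((a i : ℝ) : ℂ))| with htdef
  have ht0 : ∀ i, 0 ≤ t i := fun i => abs_nonneg _
  have htlt : ∀ i, t i < π / 2 := fun i =>
    Complex.abs_arg_lt_pi_div_two_iff.2 (Or.inl (hzre i))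
  -- modulus product
  have habs : (∏ i, ‖μ + ((a i : ℝ) : ℂ)‖) = ∏ i, b i := by
    have h := congrArg (fun z : ℂ => ‖z‖) prodeq
    simp only [norm_prod, norm_neg] at h
    rw [h]
    exact Finset.prod_congr rfl fun i _ => by
      rw [Complex.norm_of_nonneg (hb i).le]
  -- argument sum
  have hexp : Complex.exp (((∑ i, Complex.arg (μ + ((a i : ℝ) : ℂ)) : ℝ) : ℂ) * Complex.I)
      = Complex.exp ((π : ℂ) * Complex.I) := by
    rw [Complex.exp_pi_mul_I, Complex.ofReal_sum, Finset.sum_mul, Complex.exp_sum]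
    have hcongr : ∀ i ∈ Finset.univ, Complex.exp ((Complex.arg (μ + ((a i : ℝ) : ℂ)) : ℂ) * Complex.I)
        = (μ + ((a i : ℝ) : ℂ)) / ((‖μ + ((a i : ℝ) : ℂ)‖ : ℝ) : ℂ) := by
      intro i _
      rw [eq_div_iff (by
        simpa using (norm_ne_zero_iff.2 (hzne2 i)) ), mul_comm]
      exact Complex.norm_mul_exp_arg_mul_I _
    rw [Finset.prod_congr rfl hcongr, Finset.prod_div_distrib]
    have h1 : (∏ i, ((‖μ + ((a i : ℝ) : ℂ)‖ : ℝ) : ℂ)) = ((∏ i, b i : ℝ) : ℂ) := by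
      rw [← Complex.ofReal_prod, habs]
    rw [h1, prodeq, ← Complex.ofReal_prod, neg_div,
      div_self (by exact_mod_cast hprodb.ne')]
  obtain ⟨m, hm⟩ := Complex.exp_eq_exp_iff_exists_int.1 hexp
  have hsum : (∑ i, Complex.arg (μ + ((a i : ℝ) : ℂ))) = π + m * (2 * π) := by
    have h := congrArg Complex.im hm
    simpa using h
  have hπsum : π ≤ ∑ i, t i := by
    have h1 : |∑ i, Complex.arg (μ + ((a i : ℝ) : ℂ))| ≤ ∑ i, t i := by
      rw [htdef]
      exact Finset.abs_sum_le_sum_abs _ _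
    have h2 : π ≤ |∑ i, Complex.arg (μ + ((a i : ℝ) : ℂ))| := by
      rw [hsum]
      have he : π + (m : ℝ) * (2 * π) = (2 * (m : ℝ) + 1) * π := by ring
      rw [he, abs_mul, abs_of_pos Real.pi_pos]
      have hm1 : (1 : ℝ) ≤ |2 * (m : ℝ) + 1| := by
        have h0 : (2 * m + 1 : ℤ) ≠ 0 := by omega
        have := Int.one_le_abs h0
        have hcast : ((|2 * m + 1| : ℤ) : ℝ) = |2 * (m : ℝ) + 1| := by
          push_cast [Int.cast_abs]
          ring_nf
        have : (1 : ℝ) ≤ ((|2 * m + 1| : ℤ) : ℝ) := by exact_mod_cast this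
        linarith [hcast ▸ this]
      nlinarith [Real.pi_pos]
    linarith
  -- key pointwise bound
  have hkey : ∀ i, a i ≤ ‖μ + ((a i : ℝ) : ℂ)‖ * Real.cos (t i) := by
    intro i
    rw [htdef]
    simp only
    rw [Real.cos_abs]
    have hc := Complex.cos_arg (hzne2 i)
    have habspos : 0 < ‖μ + ((a i : ℝ) : ℂ)‖ := norm_pos_iff.2 (hzne2 i)
    have heq : ‖μ + ((a i : ℝ) : ℂ)‖ * Real.cos (Complex.arg (μ + ((a i : ℝ) : ℂ)))
        = (μ + ((a i : ℝ) : ℂ)).re := by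
      rw [hc]
      field_simp
    rw [heq]
    simp only [Complex.add_re, Complex.ofReal_re]
    linarith
  have hcospos : ∀ i, 0 < Real.cos (t i) := by
    intro i
    apply Real.cos_pos_of_mem_Ioo
    constructor
    · have := htlt i; have := ht0 i; have := Real.pi_pos; linarith
    · exact htlt i
  -- product inequality
  have hprod1 : (∏ i, a i) ≤ (∏ i, b i) * ∏ i, Real.cos (t i) := by
    calc (∏ i, a i) ≤ ∏ i, (‖μ + ((a i : ℝ) : ℂ)‖ * Real.cos (t i)) :=
        Finset.prod_le_prod (fun i _ => (ha i).le) (fun i _ => hkey i)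
      _ = (∏ i, ‖μ + ((a i : ℝ) : ℂ)‖) * ∏ i, Real.cos (t i) :=
        Finset.prod_mul_distrib
      _ = (∏ i, b i) * ∏ i, Real.cos (t i) := by rw [habs]
  -- Jensen for cos
  have hw0 : ∀ i ∈ (Finset.univ : Finset (Fin n)), (0:ℝ) ≤ 1 / (n:ℝ) := by
    intro i _; positivity
  have hw1 : ∑ _i : Fin n, (1 / (n:ℝ)) = 1 := by
    rw [Finset.sum_const, Finset.card_univ, Fintype.card_fin, nsmul_eq_mul]
    field_simp
  have hmem : ∀ i ∈ (Finset.univ : Finset (Fin n)), t i ∈ Set.Icc (-(π/2)) (π/2) := by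
    intro i _
    constructor
    · have := ht0 i; have := Real.pi_pos; linarith
    · exact (htlt i).le
  have hjensen := (strictConcaveOn_cos_Icc.concaveOn).le_map_sum hw0 hw1 hmem
  simp only [smul_eq_mul] at hjensen
  -- mean bounds
  have hmean1 : (∑ i, (1 / (n:ℝ)) * t i) = (∑ i, t i) / n := by
    rw [Finset.sum_div]
    exact Finset.sum_congr rfl fun i _ => by ring
  have hnR : (0:ℝ) < n := by exact_mod_cast hn0
  have hmean_lb : π / n ≤ (∑ i, t i) / n := (div_le_div_iff_of_pos_right hnR).2 hπsum
  have hmean_ub : (∑ i, t i) / n ≤ π := by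
    have hlt : (∑ i, t i) < n * (π/2) := by
      haveI : Nonempty (Fin n) := ⟨⟨0, hn0⟩⟩
      calc (∑ i, t i) < ∑ _i : Fin n, (π/2) :=
          Finset.sum_lt_sum_of_nonempty (Finset.univ_nonempty) (fun i _ => htlt i)
        _ = n * (π/2) := by
          rw [Finset.sum_const, Finset.card_univ, Fintype.card_fin, nsmul_eq_mul]
    rw [div_le_iff₀ hnR]
    nlinarith [Real.pi_pos]
  have hcm : Real.cos ((∑ i, t i) / n) ≤ Real.cos (π / n) :=
    Real.cos_le_cos_of_nonneg_of_le_pi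
      (le_of_lt (div_pos Real.pi_pos hnR)) hmean_ub hmean_lb
  -- AM-GM
  have hcosnn : ∀ i ∈ (Finset.univ : Finset (Fin n)), (0:ℝ) ≤ Real.cos (t i) :=
    fun i _ => (hcospos i).le
  have hamgm := Real.geom_mean_le_arith_mean_weighted Finset.univ
    (fun _ => 1 / (n:ℝ)) (fun i => Real.cos (t i)) hw0 hw1 hcosnn
  have hGprod : (∏ i, Real.cos (t i) ^ ((1:ℝ) / n)) = (∏ i, Real.cos (t i)) ^ ((1:ℝ) / n) :=
    Real.finset_prod_rpow Finset.univ _ hcosnn _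
  have hG0 : (0:ℝ) ≤ ∏ i, Real.cos (t i) :=
    Finset.prod_nonneg hcosnn
  have h1 : (∏ i, Real.cos (t i)) ^ ((1:ℝ) / n) ≤ Real.cos (π / n) := by
    rw [← hGprod]
    calc (∏ i, Real.cos (t i) ^ ((1:ℝ) / n)) ≤ ∑ i, (1 / (n:ℝ)) * Real.cos (t i) := hamgm
      _ ≤ Real.cos (∑ i, (1 / (n:ℝ)) * t i) := hjensen
      _ = Real.cos ((∑ i, t i) / n) := by rw [hmean1]
      _ ≤ Real.cos (π / n) := hcm
  have hfin : (∏ i, Real.cos (t i)) ≤ Real.cos (π / n) ^ n := by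
    have h2 := pow_le_pow_left₀ (Real.rpow_nonneg hG0 _) h1 n
    rwa [← Real.rpow_natCast ((∏ i, Real.cos (t i)) ^ ((1:ℝ)/n)), ← Real.rpow_mul hG0,
      one_div, inv_mul_cancel₀ (by positivity : (n:ℝ) ≠ 0), Real.rpow_one] at h2
  -- final contradiction
  have hfinal : (1 / Real.cos (π / n)) ^ n ≤ (∏ i, b i) / (∏ i, a i) := by
    rw [div_pow, one_pow, div_le_div_iff₀ (pow_pos hcos n) hproda]
    calc 1 * (∏ i, a i) = ∏ i, a i := one_mul _
      _ ≤ (∏ i, b i) * ∏ i, Real.cos (t i) := hprod1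
      _ ≤ (∏ i, b i) * Real.cos (π / n) ^ n := by
        exact mul_le_mul_of_nonneg_left hfin hprodb.le
  linarith
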